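/- Duality for submodular minimization: if F is submodular with F(∅)=0, then min over A ⊆ V of F(A) equals max over s ∈ B(F) of s_-(V), where s_- = min(s,0) componentwise. Moreover, for any A ⊆ V and s ∈ B(F), F(A) ≥ s_-(V), with equality iff {s<0} ⊆ A ⊆ {s≤0} and s(A)=F(A). -/

import Mathlib

def Submodular {p : ℕ} (F : Finset (Fin p) → ℝ) : Prop :=
  ∀ A B : Finset (Fin p), F (A ∪ B) + F (A ∩ B) ≤ F A + F B

def MemB {p : ℕ} (F : Finset (Fin p) → ℝ) (s : Fin p → ℝ) : Prop :=
  (∀ A : Finset (Fin p), ∑ k ∈ A, s k ≤ F A) ∧ ∑ k, s k = F Finset.univ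

namespace SubmodDual
open Finset

variable {p : ℕ}

def Tight (F : Finset (Fin p) → ℝ) (s : Fin p → ℝ) (A : Finset (Fin p)) : Prop :=
  ∑ k ∈ A, s k = F A

def Arc (F : Finset (Fin p) → ℝ) (s : Fin p → ℝ) (u v : Fin p) : Prop :=
  ∀ A : Finset (Fin p), Tight F s A → v ∈ A → u ∈ A

def Reach (F : Finset (Fin p) → ℝ) (s : Fin p → ℝ) : Fin p → Fin p → Prop :=
  Relation.ReflTransGen (Arc F s)

lemma reach_mem {F : Finset (Fin p) → ℝ} {s : Fin p → ℝ} {u w : Fin p}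
    (h : Reach F s u w) {B : Finset (Fin p)} (hB : Tight F s B) (hw : w ∈ B) : u ∈ B := by
  induction h with
  | refl => exact hw
  | tail _ harc ih => exact ih (harc _ hB hw)

lemma tight_union_inter {F : Finset (Fin p) → ℝ} {s : Fin p → ℝ} (hF : Submodular F)
    (hs : ∀ A : Finset (Fin p), ∑ k ∈ A, s k ≤ F A)
    {A B : Finset (Fin p)} (hA : Tight F s A) (hB : Tight F s B) :
    Tight F s (A ∪ B) ∧ Tight F s (A ∩ B) := by
  have h1 := hs (A ∪ B)
  have h2 := hs (A ∩ B)
  have h3 := hF A B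
  have h4 : ∑ k ∈ A ∪ B, s k + ∑ k ∈ A ∩ B, s k = ∑ k ∈ A, s k + ∑ k ∈ B, s k :=
    Finset.sum_union_inter
  constructor <;> unfold Tight <;> unfold Tight at hA hB <;> linarith

lemma mem_finset_inf {ι : Type*} {S : Finset ι} {f : ι → Finset (Fin p)} {a : Fin p} :
    a ∈ S.inf f ↔ ∀ u ∈ S, a ∈ f u := by
  induction S using Finset.cons_induction <;>
    simp [*, Finset.top_eq_univ]

lemma tight_finset_inf {F : Finset (Fin p) → ℝ} {s : Fin p → ℝ} (hF : Submodular F)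
    (hs : MemB F s) {ι : Type*} (S : Finset ι) (f : ι → Finset (Fin p))
    (h : ∀ u ∈ S, Tight F s (f u)) : Tight F s (S.inf f) := by
  induction S using Finset.cons_induction with
  | empty => exact hs.2
  | cons a S ha ih =>
    rw [Finset.inf_cons]
    have := (tight_union_inter hF hs.1 (h a (Finset.mem_cons_self a S))
      (ih fun u hu => h u (Finset.mem_cons.mpr (Or.inr hu)))).2
    simpa [Finset.inf_eq_inter] using this

lemma tight_finset_sup {F : Finset (Fin p) → ℝ} {s : Fin p → ℝ} (hF : Submodular F)
    (hs : MemB F s) (h0 : F ∅ = 0) {ι : Type*} (S : Finset ι) (f : ι → Finset (Fin p))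
    (h : ∀ u ∈ S, Tight F s (f u)) : Tight F s (S.sup f) := by
  induction S using Finset.cons_induction with
  | empty => simpa [Tight, Finset.bot_eq_empty] using h0.symm
  | cons a S ha ih =>
    rw [Finset.sup_cons]
    have := (tight_union_inter hF hs.1 (h a (Finset.mem_cons_self a S))
      (ih fun u hu => h u (Finset.mem_cons.mpr (Or.inr hu)))).1
    simpa [Finset.sup_eq_union] using this

lemma exists_good_tight (F : Finset (Fin p) → ℝ) (hF : Submodular F) (h0 : F ∅ = 0)
    {s : Fin p → ℝ} (hs : MemB F s)
    (hmax : ∀ t : Fin p → ℝ, MemB F t → ∑ k, min (t k) 0 ≤ ∑ k, min (s k) 0) :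
    ∃ A : Finset (Fin p), (∀ k, s k < 0 → k ∈ A) ∧ (∀ k ∈ A, s k ≤ 0) ∧
      ∑ k ∈ A, s k = F A := by
  classical
  set A : Finset (Fin p) :=
    univ.filter (fun v => ∃ n, s n < 0 ∧ Reach F s v n) with hAdef
  have hmemA : ∀ v : Fin p, v ∈ A ↔ ∃ n, s n < 0 ∧ Reach F s v n := by
    intro v; simp [hAdef]
  by_cases hcase : ∃ v ∈ A, 0 < s v
  · -- Case 1: improve s, contradiction with maximality
    exfalso
    obtain ⟨v₀, hv₀A, hv₀⟩ := hcase
    obtain ⟨n, hn, hreach⟩ := (hmemA v₀).mp hv₀A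
    have hnv : n ≠ v₀ := fun h => by rw [h] at hn; linarith
    -- every set containing n but not v₀ is strictly slack
    have hslack : ∀ B : Finset (Fin p), n ∈ B → v₀ ∉ B → ∑ k ∈ B, s k < F B := by
      intro B hnB hv₀B
      rcases lt_or_eq_of_le (hs.1 B) with h | h
      · exact h
      · exact absurd (reach_mem hreach h hnB) hv₀B
    set 𝒮 : Finset (Finset (Fin p)) :=
      univ.filter (fun B => n ∈ B ∧ v₀ ∉ B) with h𝒮
    have h𝒮ne : 𝒮.Nonempty := ⟨{n}, by simp [h𝒮, hnv.symm]⟩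
    set ε₁ : ℝ := 𝒮.inf' h𝒮ne (fun B => F B - ∑ k ∈ B, s k) with hε₁
    have hε₁pos : 0 < ε₁ := by
      rw [hε₁, Finset.lt_inf'_iff]
      intro B hB
      simp only [h𝒮, Finset.mem_filter] at hB
      linarith [hslack B hB.2.1 hB.2.2]
    set ε : ℝ := min (min ε₁ (s v₀)) (-s n) with hε
    have hεpos : 0 < ε := by
      rw [hε]
      exact lt_min (lt_min hε₁pos hv₀) (by linarith)
    have hεv₀ : ε ≤ s v₀ := le_trans (min_le_left _ _) (min_le_right _ _)
    have hεn : ε ≤ -s n := min_le_right _ _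
    have hεε₁ : ε ≤ ε₁ := le_trans (min_le_left _ _) (min_le_left _ _)
    set t : Fin p → ℝ :=
      fun k => s k + (if k = n then ε else 0) - (if k = v₀ then ε else 0) with ht
    have hsumt : ∀ B : Finset (Fin p), ∑ k ∈ B, t k =
        ∑ k ∈ B, s k + (if n ∈ B then ε else 0) - (if v₀ ∈ B then ε else 0) := by
      intro B
      rw [ht]
      simp only [Finset.sum_sub_distrib, Finset.sum_add_distrib]
      rw [Finset.sum_ite_eq' B n (fun _ => ε), Finset.sum_ite_eq' B v₀ (fun _ => ε)]
    have htB : MemB F t := by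
      constructor
      · intro B
        rw [hsumt B]
        by_cases hnB : n ∈ B <;> by_cases hv₀B : v₀ ∈ B <;>
          simp only [hnB, hv₀B, if_true, if_false]
        · linarith [hs.1 B]
        · have hB𝒮 : B ∈ 𝒮 := by simp [h𝒮, hnB, hv₀B]
          have := Finset.inf'_le (fun B => F B - ∑ k ∈ B, s k) hB𝒮
          rw [← hε₁] at this
          linarith
        · linarith [hs.1 B]
        · linarith [hs.1 B]
      · rw [hsumt univ]
        simp only [Finset.mem_univ, if_true]
        rw [hs.2]; ring
    have hgain : ∑ k, min (t k) 0 = ∑ k, min (s k) 0 + ε := by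
      have : ∀ k : Fin p, min (t k) 0 = min (s k) 0 + (if k = n then ε else 0) := by
        intro k
        by_cases hkn : k = n
        · have hkv : k ≠ v₀ := by rw [hkn]; exact hnv
          have htk : t k = s k + ε := by rw [ht]; simp [hkn, hkv, hnv]
          have h1 : s k + ε ≤ 0 := by rw [hkn]; linarith
          have h2 : s k ≤ 0 := by rw [hkn]; exact hn.le
          rw [htk, if_pos hkn, min_eq_left h1, min_eq_left h2]
        · by_cases hkv : k = v₀
          · have htk : t k = s k - ε := by rw [ht]; simp [hkn, hkv, Ne.symm hnv]
            have h1 : (0:ℝ) ≤ s k - ε := by rw [hkv]; linarith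
            have h2 : (0:ℝ) ≤ s k := by rw [hkv]; linarith
            rw [htk, if_neg hkn, min_eq_right h1, min_eq_right h2, add_zero]
          · have htk : t k = s k := by rw [ht]; simp [hkn, hkv]
            rw [htk, if_neg hkn, add_zero]
      calc ∑ k, min (t k) 0
          = ∑ k : Fin p, (min (s k) 0 + (if k = n then ε else 0)) :=
            Finset.sum_congr rfl fun k _ => this k
        _ = ∑ k, min (s k) 0 + ε := by
            rw [Finset.sum_add_distrib, Finset.sum_ite_eq' univ n (fun _ => ε)]
            simp
    have := hmax t htB
    rw [hgain] at this
    linarith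
  · -- Case 2: A is tight
    push_neg at hcase
    refine ⟨A, ?_, hcase, ?_⟩
    · intro k hk
      rw [hmemA]
      exact ⟨k, hk, Relation.ReflTransGen.refl⟩
    · have hTv : ∀ v ∈ A, ∃ T, Tight F s T ∧ v ∈ T ∧ T ⊆ A := by
        intro v hv
        obtain ⟨nv, hnv, hrv⟩ := (hmemA v).mp hv
        have hchoice : ∀ u : Fin p, ∃ T, Tight F s T ∧ v ∈ T ∧ (u ∉ A → u ∉ T) := by
          intro u
          by_cases huA : u ∈ A
          · exact ⟨univ, hs.2, Finset.mem_univ v, fun h => absurd huA h⟩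
          · have harc : ¬ Arc F s u v := by
              intro harc
              exact huA ((hmemA u).mpr ⟨nv, hnv, Relation.ReflTransGen.head harc hrv⟩)
            unfold Arc at harc
            push_neg at harc
            obtain ⟨T, hT, hvT, huT⟩ := harc
            exact ⟨T, hT, hvT, fun _ => huT⟩
        choose f hf1 hf2 hf3 using hchoice
        refine ⟨univ.inf f, tight_finset_inf hF hs univ f (fun u _ => hf1 u),
          mem_finset_inf.mpr (fun u _ => hf2 u), ?_⟩
        intro w hw
        by_contra hwA
        exact hf3 w hwA (mem_finset_inf.mp hw w (Finset.mem_univ w))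
      choose T hT1 hT2 hT3 using hTv
      have hAeq : A = A.attach.sup (fun v => T v.1 v.2) := by
        apply Finset.Subset.antisymm
        · intro v hv
          rw [Finset.mem_sup]
          exact ⟨⟨v, hv⟩, Finset.mem_attach _ _, hT2 v hv⟩
        · intro w hw
          rw [Finset.mem_sup] at hw
          obtain ⟨⟨v, hv⟩, _, hwT⟩ := hw
          exact hT3 v hv hwT
      have := tight_finset_sup hF hs h0 A.attach (fun v => T v.1 v.2)
        (fun u _ => hT1 u.1 u.2)
      rw [← hAeq] at this
      exact this

/-- The easy direction: bound and equality characterization. -/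
lemma easy_part (F : Finset (Fin p) → ℝ) (A : Finset (Fin p)) (s : Fin p → ℝ)
    (hs : MemB F s) :
    (∑ k, min (s k) 0) ≤ F A ∧
      ((∑ k, min (s k) 0) = F A ↔
        ((∀ k, s k < 0 → k ∈ A) ∧ (∀ k ∈ A, s k ≤ 0) ∧ ∑ k ∈ A, s k = F A)) := by
  have hsplit : ∑ k ∈ A, min (s k) 0 + ∑ k ∈ Aᶜ, min (s k) 0 = ∑ k, min (s k) 0 :=
    Finset.sum_add_sum_compl A _
  have h1 : ∑ k ∈ A, min (s k) 0 ≤ ∑ k ∈ A, s k :=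
    Finset.sum_le_sum fun k _ => min_le_left _ _
  have h2 : ∑ k ∈ Aᶜ, min (s k) 0 ≤ 0 :=
    Finset.sum_nonpos fun k _ => min_le_right _ _
  have h3 : ∑ k ∈ A, s k ≤ F A := hs.1 A
  refine ⟨by linarith, ?_, ?_⟩
  · intro heq
    have e2 : ∑ k ∈ Aᶜ, min (s k) 0 = 0 := le_antisymm h2 (by linarith)
    have e1 : ∑ k ∈ A, min (s k) 0 = ∑ k ∈ A, s k := le_antisymm h1 (by linarith)
    have e3 : ∑ k ∈ A, s k = F A := le_antisymm h3 (by linarith)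
    have hc : ∀ k ∈ Aᶜ, min (s k) 0 = 0 := by
      intro k hk
      have := (Finset.sum_eq_zero_iff_of_nonpos
        (fun k _ => min_le_right (s k) 0)).mp e2
      exact this k hk
    have ha : ∀ k ∈ A, s k ≤ 0 := by
      intro k hk
      have hz : ∑ k ∈ A, (s k - min (s k) 0) = 0 := by
        rw [Finset.sum_sub_distrib, e1, sub_self]
      have := (Finset.sum_eq_zero_iff_of_nonneg
        (fun k _ => sub_nonneg.mpr (min_le_left (s k) 0))).mp hz k hk
      have : s k = min (s k) 0 := by linarith
      calc s k = min (s k) 0 := this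
        _ ≤ 0 := min_le_right _ _
    refine ⟨fun k hk => ?_, ha, e3⟩
    by_contra hkA
    have := hc k (Finset.mem_compl.mpr hkA)
    have : min (s k) 0 = s k := min_eq_left hk.le
    rw [hc k (Finset.mem_compl.mpr hkA)] at this
    linarith
  · rintro ⟨hneg, hA0, htight⟩
    have e2 : ∑ k ∈ Aᶜ, min (s k) 0 = 0 := by
      apply Finset.sum_eq_zero
      intro k hk
      have : ¬ s k < 0 := fun h => (Finset.mem_compl.mp hk) (hneg k h)
      exact min_eq_right (not_lt.mp this)
    have e1 : ∑ k ∈ A, min (s k) 0 = ∑ k ∈ A, s k :=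
      Finset.sum_congr rfl fun k hk => min_eq_left (hA0 k hk)
    linarith

/-- Elements of `A` with index below `j`. -/
def below (A : Finset (Fin p)) (j : ℕ) : Finset (Fin p) :=
  A.filter (fun i => (i : ℕ) < j)

@[simp] lemma mem_below {A : Finset (Fin p)} {j : ℕ} {i : Fin p} :
    i ∈ below A j ↔ i ∈ A ∧ (i : ℕ) < j := Finset.mem_filter

lemma below_self (A : Finset (Fin p)) : below A p = A :=
  Finset.filter_true_of_mem fun i _ => i.isLt

lemma below_zero (A : Finset (Fin p)) : below A 0 = ∅ := by
  ext i; simp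

lemma telescope (F : Finset (Fin p) → ℝ) (A : Finset (Fin p)) :
    ∑ k : Fin p, (F (below A ((k : ℕ) + 1)) - F (below A (k : ℕ))) = F A - F ∅ := by
  rw [Fin.sum_univ_eq_sum_range (fun j => F (below A (j + 1)) - F (below A j))]
  rw [Finset.sum_range_sub (fun j => F (below A j))]
  rw [below_self, below_zero]

lemma exists_base (F : Finset (Fin p) → ℝ) (hF : Submodular F) (h0 : F ∅ = 0) :
    ∃ s : Fin p → ℝ, (∀ A : Finset (Fin p), ∑ k ∈ A, s k ≤ F A) ∧ ∑ k, s k = F Finset.univ := by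
  classical
  refine ⟨fun k => F (below univ ((k : ℕ) + 1)) - F (below univ (k : ℕ)), ?_, ?_⟩
  · intro A
    have key : ∀ k ∈ A,
        F (below univ ((k : ℕ) + 1)) - F (below univ (k : ℕ))
        ≤ F (below A ((k : ℕ) + 1)) - F (below A (k : ℕ)) := by
      intro k hk
      have hXY := hF (below (univ : Finset (Fin p)) (k : ℕ)) (below A (k : ℕ) ∪ {k})
      have hU : below (univ : Finset (Fin p)) (k : ℕ) ∪ (below A (k : ℕ) ∪ {k}) =
          below (univ : Finset (Fin p)) ((k : ℕ) + 1) := by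
        ext i
        simp only [Finset.mem_union, mem_below, Finset.mem_singleton, Finset.mem_univ,
          true_and, Fin.ext_iff]
        constructor
        · rintro (h | ⟨_, h⟩ | h) <;> omega
        · intro h
          rcases lt_or_ge (i : ℕ) (k : ℕ) with h' | h'
          · exact Or.inl h'
          · exact Or.inr (Or.inr (by omega))
      have hI : below (univ : Finset (Fin p)) (k : ℕ) ∩ (below A (k : ℕ) ∪ {k}) =
          below A (k : ℕ) := by
        ext i
        simp only [Finset.mem_inter, Finset.mem_union, mem_below, Finset.mem_singleton,
          Finset.mem_univ, true_and, Fin.ext_iff]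
        constructor
        · rintro ⟨h1, (⟨hA, h2⟩ | h2)⟩
          · exact ⟨hA, h2⟩
          · omega
        · rintro ⟨hA, h⟩
          exact ⟨h, Or.inl ⟨hA, h⟩⟩
      have hY : below A (k : ℕ) ∪ {k} = below A ((k : ℕ) + 1) := by
        ext i
        simp only [Finset.mem_union, mem_below, Finset.mem_singleton]
        constructor
        · rintro (⟨hA, h⟩ | h)
          · exact ⟨hA, by omega⟩
          · subst h; exact ⟨hk, by omega⟩
        · rintro ⟨hA, h⟩
          rcases lt_or_ge (i : ℕ) (k : ℕ) with h' | h'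
          · exact Or.inl ⟨hA, h'⟩
          · exact Or.inr (Fin.ext (by omega))
      rw [hU, hI, hY] at hXY
      linarith
    calc ∑ k ∈ A, (F (below univ ((k : ℕ) + 1)) - F (below univ (k : ℕ)))
        ≤ ∑ k ∈ A, (F (below A ((k : ℕ) + 1)) - F (below A (k : ℕ))) :=
          Finset.sum_le_sum key
      _ = ∑ k : Fin p, (F (below A ((k : ℕ) + 1)) - F (below A (k : ℕ))) := by
          refine (Finset.sum_subset (f := fun k : Fin p => F (below A ((k : ℕ) + 1)) - F (below A (k : ℕ))) (Finset.subset_univ A) ?_)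
          intro k _ hk
          have : below A ((k : ℕ) + 1) = below A (k : ℕ) := by
            ext i
            simp only [mem_below]
            constructor
            · rintro ⟨hA, h⟩
              refine ⟨hA, ?_⟩
              have hne : (i : ℕ) ≠ (k : ℕ) := fun he => hk (Fin.ext he ▸ hA)
              omega
            · rintro ⟨hA, h⟩; exact ⟨hA, by omega⟩
          simp only [this, sub_self]
      _ = F A - F ∅ := telescope F A
      _ ≤ F A := by rw [h0]; simp
  · have := telescope F (univ : Finset (Fin p))
    rw [h0, sub_zero] at this
    exact this

lemma exists_maximizer (F : Finset (Fin p) → ℝ)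
    (hne : ∃ s : Fin p → ℝ, MemB F s) :
    ∃ s : Fin p → ℝ, MemB F s ∧
      ∀ t : Fin p → ℝ, MemB F t → ∑ k, min (t k) 0 ≤ ∑ k, min (s k) 0 := by
  classical
  set B : Set (Fin p → ℝ) := {s | MemB F s} with hB
  have hclosed : IsClosed B := by
    have : B = (⋂ A : Finset (Fin p), {s : Fin p → ℝ | ∑ k ∈ A, s k ≤ F A}) ∩
        {s : Fin p → ℝ | ∑ k, s k = F Finset.univ} := by
      ext s
      simp [hB, MemB, Set.mem_iInter]
    rw [this]
    refine IsClosed.inter (isClosed_iInter fun A => ?_) ?_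
    · exact isClosed_le (continuous_finset_sum A fun k _ => continuous_apply k)
        continuous_const
    · exact isClosed_eq (continuous_finset_sum univ fun k _ => continuous_apply k)
        continuous_const
  have hsub : B ⊆ Set.Icc (fun k => F Finset.univ - F (Finset.univ.erase k))
      (fun k => F {k}) := by
    rintro s ⟨h1, h2⟩
    constructor
    · intro k
      have hub := h1 (Finset.univ.erase k)
      have hsum : s k + ∑ j ∈ Finset.univ.erase k, s j = ∑ j, s j :=
        Finset.add_sum_erase _ s (Finset.mem_univ k)
      simp only
      linarith [h2 ▸ hsum]
    · intro k
      have := h1 {k}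
      simpa using this
  have hcompact : IsCompact B :=
    (isCompact_Icc).of_isClosed_subset hclosed hsub
  obtain ⟨s, hsB, hmax⟩ := hcompact.exists_isMaxOn hne
    ((continuous_finset_sum univ fun k _ =>
      (continuous_apply k).min continuous_const).continuousOn)
  exact ⟨s, hsB, fun t ht => hmax ht⟩

end SubmodDual

open SubmodDual in
/-- Duality for submodular function minimization:
`min_{A ⊆ V} F(A) = max_{s ∈ B(F)} s₋(V)`, and for any `A` and `s ∈ B(F)`,
`F(A) ≥ s₋(V)` with equality iff `{s < 0} ⊆ A ⊆ {s ≤ 0}` and `s(A) = F(A)`. -/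
theorem submodular_min_duality {p : ℕ} (F : Finset (Fin p) → ℝ)
    (hF : Submodular F) (h0 : F ∅ = 0) :
    IsGreatest
        {x : ℝ | ∃ s : Fin p → ℝ, MemB F s ∧ x = ∑ k, min (s k) 0}
        (((Finset.univ : Finset (Finset (Fin p))).image F).min'
          (Finset.univ_nonempty.image F)) ∧
      ∀ (A : Finset (Fin p)) (s : Fin p → ℝ), MemB F s →
        (∑ k, min (s k) 0) ≤ F A ∧
        ((∑ k, min (s k) 0) = F A ↔
          ((∀ k, s k < 0 → k ∈ A) ∧ (∀ k ∈ A, s k ≤ 0) ∧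
            ∑ k ∈ A, s k = F A)) := by
  obtain ⟨s₀, hs₀1, hs₀2⟩ := exists_base F hF h0
  obtain ⟨s, hsB, hmax⟩ := exists_maximizer F ⟨s₀, hs₀1, hs₀2⟩
  obtain ⟨A, h1, h2, h3⟩ := exists_good_tight F hF h0 hsB hmax
  have heq : ∑ k, min (s k) 0 = F A := (easy_part F A s hsB).2.mpr ⟨h1, h2, h3⟩
  set m := ((Finset.univ : Finset (Finset (Fin p))).image F).min'
    (Finset.univ_nonempty.image F) with hm
  obtain ⟨B₀, _, hB₀⟩ := Finset.mem_image.mp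
    (Finset.min'_mem ((Finset.univ : Finset (Finset (Fin p))).image F)
      (Finset.univ_nonempty.image F))
  have hub : ∀ x ∈ {x : ℝ | ∃ s : Fin p → ℝ, MemB F s ∧ x = ∑ k, min (s k) 0}, x ≤ m := by
    rintro x ⟨t, ht, rfl⟩
    rw [hm, ← hB₀]
    exact (easy_part F B₀ t ht).1
  refine ⟨⟨⟨s, hsB, ?_⟩, hub⟩, fun A' s' hs' => easy_part F A' s' hs'⟩
  have hle : m ≤ ∑ k, min (s k) 0 := by
    rw [heq]
    exact Finset.min'_le _ _ (Finset.mem_image_of_mem F (Finset.mem_univ A))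
  exact le_antisymm hle (hub _ ⟨s, hsB, rfl⟩)
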